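/- If X=x causes Y=y in (M,u⃗) according to Modified HP with X⃗ a singleton, then X=x causes Y=y according to each of Def 2, Def 4, and Def 8. -/
import Mathlib


open Classical

/-- A strongly recursive structural-equations (causal) model with exogenous
variables `U`, endogenous variables `V`, and values in `α`.  `rng v` is the
range `R(v)` of an endogenous variable; `F v u s` is the structural equation of
`v` evaluated in context `u` at the assignment `s` (it does not depend on
`s v`); `solve Z g u` is the unique solution of the model obtained by
intervening `Z ← g` in context `u`; `actual u` is the actual world of context
`u`; `prec` is a well-founded order witnessing strong recursivity. -/
structure CausalModel (U V α : Type) where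
  rng : V → Set α
  F : V → U → (V → α) → α
  F_rng : ∀ (v : V) (u : U) (s : V → α), F v u s ∈ rng v
  F_self : ∀ (v : V) (u : U) (s s' : V → α), (∀ w, w ≠ v → s w = s' w) → F v u s = F v u s'
  solve : Set V → (V → α) → U → V → α
  solve_mem : ∀ (Z : Set V) (g : V → α) (u : U), ∀ v ∈ Z, solve Z g u v = g v
  solve_not_mem : ∀ (Z : Set V) (g : V → α) (u : U) (v : V), v ∉ Z →
    solve Z g u v = F v u (solve Z g u)
  solve_unique : ∀ (Z : Set V) (g : V → α) (u : U) (s : V → α),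
    (∀ v ∈ Z, s v = g v) → (∀ v ∉ Z, s v = F v u s) → s = solve Z g u
  actual : U → V → α
  actual_def : ∀ (g : V → α) (u : U), solve ∅ g u = actual u
  prec : V → V → Prop
  prec_wf : WellFounded prec
  prec_dep : ∀ a b : V, (∃ (u : U) (s s' : V → α), (∀ w, s w ∈ rng w) ∧ (∀ w, s' w ∈ rng w) ∧
    (∀ w, w ≠ a → s w = s' w) ∧ F b u s ≠ F b u s') → prec a b

namespace CausalModel

variable {U V α : Type}

/-- The assignment that is `x` on `X` and `g` elsewhere. -/
noncomputable def merge (X : Set V) (x g : V → α) : V → α :=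
  fun v => if v ∈ X then x v else g v

/-- `g` is a valid setting: every variable gets a value in its range. -/
def Setting (M : CausalModel U V α) (g : V → α) : Prop := ∀ v, g v ∈ M.rng v

/-- `X⃗=x⃗` is directly sufficient for `Y⃗=y⃗`: in every context, intervening
`X⃗ ← x⃗` together with arbitrary (in-range) values for all remaining variables
`C⃗ = V ∖ (X⃗ ∪ Y⃗)` yields `Y⃗ = y⃗`. -/
def directlySuff (M : CausalModel U V α) (X : Set V) (x : V → α) (Y : Set V) (y : V → α) : Prop :=
  ∀ g : V → α, M.Setting g → (∀ v ∈ X, g v = x v) →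
    ∀ u : U, ∀ v ∈ Y, M.solve (X ∪ (X ∪ Y)ᶜ) g u v = y v

/-- Actual direct sufficiency: as `directlySuff` but only in the given context `u`. -/
def actDirectlySuff (M : CausalModel U V α) (u : U) (X : Set V) (x : V → α)
    (Y : Set V) (y : V → α) : Prop :=
  ∀ g : V → α, M.Setting g → (∀ v ∈ X, g v = x v) →
    ∀ v ∈ Y, M.solve (X ∪ (X ∪ Y)ᶜ) g u v = y v

/-- `X⃗=x⃗` is weakly sufficient for `Y⃗=y⃗`: in every context, `[X⃗ ← x⃗] Y⃗=y⃗`. -/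
def weaklySuff (M : CausalModel U V α) (X : Set V) (x : V → α) (Y : Set V) (y : V → α) : Prop :=
  ∀ u : U, ∀ v ∈ Y, M.solve X x u v = y v

/-- Actual weak sufficiency in context `u`: `(M,u) ⊨ [X⃗ ← x⃗] Y⃗=y⃗`. -/
def actWeaklySuff (M : CausalModel U V α) (u : U) (X : Set V) (x : V → α)
    (Y : Set V) (y : V → α) : Prop :=
  ∀ v ∈ Y, M.solve X x u v = y v

/-- `X⃗=x⃗` is strongly sufficient for `Y⃗=y⃗`: it is directly sufficient for some
superset `N⃗ ⊇ Y⃗` with values extending `y⃗`. -/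
def stronglySuff (M : CausalModel U V α) (X : Set V) (x : V → α) (Y : Set V) (y : V → α) : Prop :=
  ∃ (N : Set V) (n : V → α), Y ⊆ N ∧ (∀ v ∈ Y, n v = y v) ∧ M.directlySuff X x N n

/-- Actual strong sufficiency of `X⃗=x⃗` for the single effect `Y0 = y` along the
network `N` in context `u`. -/
def actStronglySuffNet (M : CausalModel U V α) (u : U) (X : Set V) (x : V → α)
    (Y0 : V) (y : α) (N : Set V) : Prop :=
  ∃ n : V → α, Y0 ∈ N ∧ n Y0 = y ∧ M.actDirectlySuff u X x N n

/-- `a` is a parent of `b`: the equation of `b` depends on the value of `a`. -/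
def IsParent (M : CausalModel U V α) (a b : V) : Prop :=
  ∃ (u : U) (s s' : V → α), M.Setting s ∧ M.Setting s' ∧
    (∀ w, w ≠ a → s w = s' w) ∧ M.F b u s ≠ M.F b u s'

/-- `a` is only a parent of `b`: the single edge `a → b` is the only directed
path from `a` to `b`. -/
def OnlyParent (M : CausalModel U V α) (a b : V) : Prop :=
  M.IsParent a b ∧ ¬ ∃ z, M.IsParent a z ∧ Relation.TransGen M.IsParent z b

/-- `R` is the set of root variables: equations of members of `R` depend only on
the context, and equations of all other variables do not depend on the context
(exogenous variables appear only in equations of the form `V = U`). -/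
def IsRootSet (M : CausalModel U V α) (R : Set V) : Prop :=
  (∀ v ∈ R, ∀ (u : U) (s s' : V → α), M.F v u s = M.F v u s') ∧
  (∀ v ∉ R, ∀ (u u' : U) (s : V → α), M.F v u s = M.F v u' s)

/-- Def 2: contrastive necessity with actual strong sufficiency (AC1, AC2, AC3). -/
def CauseDef2 (M : CausalModel U V α) (u : U) (X : Set V) (x : V → α) (Y0 : V) (y : α) : Prop :=
  (∀ v ∈ X, M.actual u v = x v) ∧ M.actual u Y0 = y ∧
  (∃ (W N : Set V) (x' : V → α), Disjoint W (X ∪ {Y0}) ∧ (∀ v ∈ X, x' v ∈ M.rng v) ∧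
      M.actStronglySuffNet u (X ∪ W) (merge X x (M.actual u)) Y0 y N ∧
      ∀ S ⊆ N, ¬ M.actStronglySuffNet u (X ∪ W) (merge X x' (M.actual u)) Y0 y S) ∧
  (∀ X' ⊂ X, ¬ ∃ (W N : Set V) (x' : V → α), Disjoint W (X' ∪ {Y0}) ∧
      (∀ v ∈ X', x' v ∈ M.rng v) ∧
      M.actStronglySuffNet u (X' ∪ W) (merge X' x (M.actual u)) Y0 y N ∧
      ∀ S ⊆ N, ¬ M.actStronglySuffNet u (X' ∪ W) (merge X' x' (M.actual u)) Y0 y S)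

/-- Def 3: contrastive necessity with actual direct sufficiency (AC1, AC2, AC3). -/
def CauseDef3 (M : CausalModel U V α) (u : U) (X : Set V) (x : V → α) (Y0 : V) (y : α) : Prop :=
  (∀ v ∈ X, M.actual u v = x v) ∧ M.actual u Y0 = y ∧
  (∃ (W : Set V) (x' : V → α), Disjoint W (X ∪ {Y0}) ∧ (∀ v ∈ X, x' v ∈ M.rng v) ∧
      M.actDirectlySuff u (X ∪ W) (merge X x (M.actual u)) {Y0} (fun _ => y) ∧
      ¬ M.actDirectlySuff u (X ∪ W) (merge X x' (M.actual u)) {Y0} (fun _ => y)) ∧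
  (∀ X' ⊂ X, ¬ ∃ (W : Set V) (x' : V → α), Disjoint W (X' ∪ {Y0}) ∧
      (∀ v ∈ X', x' v ∈ M.rng v) ∧
      M.actDirectlySuff u (X' ∪ W) (merge X' x (M.actual u)) {Y0} (fun _ => y) ∧
      ¬ M.actDirectlySuff u (X' ∪ W) (merge X' x' (M.actual u)) {Y0} (fun _ => y))

/-- Def 4 (singleton cause): contrastive necessity with non-actual weak sufficiency. -/
def CauseDef4 (M : CausalModel U V α) (u : U) (X0 : V) (x0 : α) (Y0 : V) (y : α) : Prop :=
  M.actual u X0 = x0 ∧ M.actual u Y0 = y ∧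
  ∃ (W : Set V) (x' : α), Disjoint W ({X0} ∪ {Y0} : Set V) ∧ x' ∈ M.rng X0 ∧
    M.weaklySuff ({X0} ∪ W) (merge {X0} (fun _ => x0) (M.actual u)) {Y0} (fun _ => y) ∧
    ¬ M.weaklySuff ({X0} ∪ W) (merge {X0} (fun _ => x') (M.actual u)) {Y0} (fun _ => y)

/-- Def 8 (singleton cause): minimal necessity with actual strong sufficiency
(minimality AC3 is automatic for singletons). -/
def CauseDef8 (M : CausalModel U V α) (u : U) (X0 : V) (x0 : α) (Y0 : V) (y : α) : Prop :=
  M.actual u X0 = x0 ∧ M.actual u Y0 = y ∧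
  ∃ W N : Set V, Disjoint W ({X0} ∪ {Y0} : Set V) ∧
    M.actStronglySuffNet u ({X0} ∪ W) (merge {X0} (fun _ => x0) (M.actual u)) Y0 y N ∧
    ∀ S ⊆ N, ¬ M.actStronglySuffNet u W (M.actual u) Y0 y S

/-- Def 10 (singleton cause): minimal necessity with non-actual weak sufficiency. -/
def CauseDef10 (M : CausalModel U V α) (u : U) (X0 : V) (x0 : α) (Y0 : V) (y : α) : Prop :=
  M.actual u X0 = x0 ∧ M.actual u Y0 = y ∧
  ∃ W : Set V, Disjoint W ({X0} ∪ {Y0} : Set V) ∧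
    M.weaklySuff ({X0} ∪ W) (merge {X0} (fun _ => x0) (M.actual u)) {Y0} (fun _ => y) ∧
    ¬ M.weaklySuff W (M.actual u) {Y0} (fun _ => y)

end CausalModel

namespace CausalModel

/-- Modified HP with a singleton cause implies Def 2, Def 4, and
Def 8 (in models satisfying the root-variable restriction). -/
theorem modifiedHP_implies_defs {U V α : Type} (M : CausalModel U V α)
    (R : Set V) (hR : M.IsRootSet R) (u : U)
    (X0 Y0 : V) (x0 y : α) (hne : X0 ≠ Y0)
    (hAC1x : M.actual u X0 = x0) (hAC1y : M.actual u Y0 = y)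
    (hMHP : ∃ (W : Set V) (x' : α), W ⊆ ({X0} : Set V)ᶜ ∧ x' ∈ M.rng X0 ∧
        ¬ M.actWeaklySuff u ({X0} ∪ W) (merge {X0} (fun _ => x') (M.actual u))
            {Y0} (fun _ => y)) :
    CauseDef2 M u {X0} (fun _ => x0) Y0 y ∧ CauseDef4 M u X0 x0 Y0 y ∧
      CauseDef8 M u X0 x0 Y0 y := by
  classical
  -- basic facts about the actual world
  have hactfix : ∀ v, M.actual u v = M.F v u (M.actual u) := by
    intro v
    have h := M.solve_not_mem ∅ (M.actual u) u v (by simp)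
    rwa [M.actual_def] at h
  have hactset : M.Setting (M.actual u) := by
    intro v; rw [hactfix v]; exact M.F_rng v u _
  obtain ⟨W, x', hWX, hx'rng, hfail⟩ := hMHP
  set g' : V → α := merge {X0} (fun _ => x') (M.actual u) with hg'
  set gx : V → α := merge {X0} (fun _ => x0) (M.actual u) with hgx
  have hg'X0 : g' X0 = x' := by simp [hg', merge]
  have hg'ne : ∀ v, v ≠ X0 → g' v = M.actual u v := by
    intro v hv; simp [hg', merge, hv]
  have hgxZ : ∀ v, gx v = M.actual u v := by
    intro v
    by_cases hv : v = X0
    · subst hv; simp [hgx, merge, hAC1x]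
    · simp [hgx, merge, hv]
  set ZW : Set V := {X0} ∪ W with hZW
  -- the failure of weak sufficiency for x' at Y0
  have hne' : M.solve ZW g' u Y0 ≠ y := by
    intro h
    exact hfail (fun v hv => by
      rcases Set.mem_singleton_iff.mp hv with rfl; exact h)
  have hX0W : X0 ∉ W := fun h => (hWX h) rfl
  have hY0W : Y0 ∉ W := by
    intro h
    apply hne'
    rw [M.solve_mem ZW g' u Y0 (Or.inr h), hg'ne Y0 (Ne.symm hne), hAC1y]
  have hY0ZW : Y0 ∉ ZW := by
    rintro (h | h)
    · exact hne (Set.mem_singleton_iff.mp h).symm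
    · exact hY0W h
  have hY0R : Y0 ∉ R := by
    intro h
    apply hne'
    rw [M.solve_not_mem ZW g' u Y0 hY0ZW, hR.1 Y0 h u _ (M.actual u),
      ← hactfix Y0, hAC1y]
  -- the enlarged witness set
  set Wb : Set V := W ∪ (R \ ({X0} ∪ {Y0})) with hWb
  set Z : Set V := {X0} ∪ Wb with hZ
  have hX0Wb : X0 ∉ Wb := by
    rintro (h | h)
    · exact hX0W h
    · exact h.2 (Or.inl rfl)
  have hY0Wb : Y0 ∉ Wb := by
    rintro (h | h)
    · exact hY0W h
    · exact h.2 (Or.inr rfl)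
  have hY0Z : Y0 ∉ Z := by
    rintro (h | h)
    · exact hne (Set.mem_singleton_iff.mp h).symm
    · exact hY0Wb h
  have hdisj : Disjoint Wb ({X0} ∪ {Y0} : Set V) := by
    rw [Set.disjoint_left]
    rintro v hv (h | h)
    · rcases Set.mem_singleton_iff.mp h with rfl; exact hX0Wb hv
    · rcases Set.mem_singleton_iff.mp h with rfl; exact hY0Wb hv
  have hZWsub : ZW ⊆ Z := by
    rintro v (h | h)
    · exact Or.inl h
    · exact Or.inr (Or.inl h)
  have hZR : ∀ v, v ∉ Z → v ∉ R := by
    intro v hv hvR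
    apply hv
    by_cases hvx : v = X0
    · exact Or.inl hvx
    · refine Or.inr (Or.inr ⟨hvR, ?_⟩)
      rintro (h | h)
      · exact hvx (Set.mem_singleton_iff.mp h)
      · rcases Set.mem_singleton_iff.mp h with rfl; exact hY0R hvR
  -- transferring the x'-solution from ZW to Z
  have htrans : M.solve ZW g' u = M.solve Z g' u := by
    apply M.solve_unique
    · rintro v (h | h)
      · rcases Set.mem_singleton_iff.mp h with rfl
        exact M.solve_mem ZW g' u v (Or.inl rfl)
      · rcases h with h | h
        · exact M.solve_mem ZW g' u v (Or.inr h)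
        · by_cases hvZW : v ∈ ZW
          · exact M.solve_mem ZW g' u v hvZW
          · have hvx : v ≠ X0 := by
              intro hh; exact hvZW (Or.inl (hh ▸ rfl))
            rw [M.solve_not_mem ZW g' u v hvZW, hR.1 v h.1 u _ (M.actual u),
              ← hactfix v, hg'ne v hvx]
    · intro v hv
      exact M.solve_not_mem ZW g' u v (fun h => hv (hZWsub h))
  -- solving with actual values on Z gives the actual world
  have hsolve_act : ∀ h : V → α, (∀ v ∈ Z, h v = M.actual u v) →
      M.actual u = M.solve Z h u := by
    intro h hh
    apply M.solve_unique
    · intro v hv; exact (hh v hv).symm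
    · intro v _; exact hactfix v
  -- context independence of solutions once all roots are set
  have hctx : ∀ (g : V → α) (u' : U), M.solve Z g u = M.solve Z g u' := by
    intro g u'
    apply M.solve_unique
    · intro v hv; exact M.solve_mem Z g u v hv
    · intro v hv
      rw [M.solve_not_mem Z g u v hv]
      exact hR.2 v (hZR v hv) u u' _
  -- the x'-solution is a fixed point; it is a valid setting
  set h' : V → α := M.solve Z g' u with hh'
  have hh'set : M.Setting h' := by
    intro v
    by_cases hv : v ∈ Z
    · rw [hh', M.solve_mem Z g' u v hv]
      by_cases hvx : v = X0
      · subst hvx; rw [hg'X0]; exact hx'rng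
      · rw [hg'ne v hvx]; exact hactset v
    · rw [hh', M.solve_not_mem Z g' u v hv]; exact M.F_rng v u _
  have hh'Y0 : h' Y0 ≠ y := htrans ▸ hne'
  -- the refutation lemma for the necessity clauses
  have hrefute : ∀ (Xs : Set V) (gv : V → α), Xs ⊆ Z →
      (∀ v ∈ Xs, h' v = gv v) → ∀ S ⊆ Zᶜ,
      ¬ M.actStronglySuffNet u Xs gv Y0 y S := by
    rintro Xs gv hXs hagree S hS ⟨n, hY0S, hnY0, hds⟩
    have hset_eq : Xs ∪ (Xs ∪ S)ᶜ = Sᶜ := by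
      ext v
      constructor
      · rintro (h | h)
        · exact fun hvS => (hS hvS) (hXs h)
        · exact fun hvS => h (Or.inr hvS)
      · intro hv
        by_cases hvX : v ∈ Xs
        · exact Or.inl hvX
        · exact Or.inr (fun hh => by
            rcases hh with hh | hh
            · exact hvX hh
            · exact hv hh)
    have hfixed : h' = M.solve Sᶜ h' u := by
      apply M.solve_unique
      · intro v _; rfl
      · intro v hv
        have hvZ : v ∉ Z := hS (not_not.mp hv)
        exact M.solve_not_mem Z g' u v hvZ
    have := hds h' hh'set hagree Y0 hY0S
    rw [hset_eq, ← hfixed] at this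
    exact hh'Y0 (this.trans hnY0)
  -- the positive strong sufficiency clause
  have hpos : M.actStronglySuffNet u Z gx Y0 y Zᶜ := by
    refine ⟨M.actual u, hY0Z, hAC1y, ?_⟩
    intro h _ hh v hv
    have hset_eq : Z ∪ (Z ∪ Zᶜ)ᶜ = Z := by simp
    rw [hset_eq]
    rw [← hsolve_act h (fun w hw => (hh w hw).trans (hgxZ w))]
  -- agreement facts for the two refutations
  have hagree2 : ∀ v ∈ Z, h' v = g' v := fun v hv => M.solve_mem Z g' u v hv
  have hagree8 : ∀ v ∈ Wb, h' v = M.actual u v := by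
    intro v hv
    have hvx : v ≠ X0 := fun hh => hX0Wb (hh ▸ hv)
    rw [hagree2 v (Or.inr hv), hg'ne v hvx]
  refine ⟨?_, ?_, ?_⟩
  · -- Def 2
    refine ⟨fun v hv => by rcases Set.mem_singleton_iff.mp hv with rfl; exact hAC1x,
      hAC1y, ⟨Wb, Zᶜ, fun _ => x', hdisj,
        fun v hv => by rcases Set.mem_singleton_iff.mp hv with rfl; exact hx'rng,
        hpos, hrefute Z g' (le_refl Z) hagree2⟩, ?_⟩
    intro X' hX'
    have hX'e : X' = ∅ := by
      rcases (Set.ssubset_iff_of_subset hX'.1).mp hX' with ⟨a, ha, hna⟩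
      rcases Set.mem_singleton_iff.mp ha with rfl
      ext v; simp only [Set.mem_empty_iff_false, iff_false]
      intro hv
      rcases Set.mem_singleton_iff.mp (hX'.1 hv) with rfl
      exact hna hv
    subst hX'e
    rintro ⟨W2, N2, x2, _, _, hp, hn⟩
    have hm : ∀ f : V → α, merge (∅ : Set V) f (M.actual u) = M.actual u := by
      intro f; funext v; simp [merge]
    rw [hm] at hp
    exact hn N2 (le_refl N2) (by rwa [hm])
  · -- Def 4
    refine ⟨hAC1x, hAC1y, Wb, x', hdisj, hx'rng, ?_, ?_⟩
    · intro u' v hv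
      rcases Set.mem_singleton_iff.mp hv with rfl
      rw [← hctx gx u', ← hsolve_act gx (fun w _ => hgxZ w), hAC1y]
    · intro hws
      have h2 := hws u Y0 rfl
      exact hne' (by rw [htrans]; exact h2)
  · -- Def 8
    exact ⟨hAC1x, hAC1y, Wb, Zᶜ, hdisj, hpos,
      hrefute Wb (M.actual u) Set.subset_union_right hagree8⟩

end CausalModel
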